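/- Let z ∈ ℂ ∖ [−1,1] and let R be a real number with 1 < R < |z|. Then (1/(2πi)) · ∮_{|ζ|=R} ζ / ((ζ−1)^{1/2}(ζ+1)^{1/2}(ζ−z)) dζ = 1 − z/((z−1)^{1/2}(z+1)^{1/2}), where the integral is over the positively oriented circle of radius R centered at 0 and each square root is the principal complex square root. -/

import Mathlib

open Complex Metric Set Filter



noncomputable def Complex.abs : AbsoluteValue ℂ ℝ where
  toFun := fun z => ‖z‖
  map_mul' := norm_mul
  nonneg' := norm_nonneg
  eq_zero' := fun _ => norm_eq_zero
  add_le' := norm_add_le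

@[simp] lemma Complex.abs_apply' (z : ℂ) : Complex.abs z = ‖z‖ := rfl

lemma Complex.norm_eq_abs (z : ℂ) : ‖z‖ = Complex.abs z := rfl

lemma Complex.abs_ofReal (r : ℝ) : Complex.abs (r : ℂ) = |r| := Complex.norm_real r

lemma Complex.re_le_abs (z : ℂ) : z.re ≤ Complex.abs z := Complex.re_le_norm z

lemma Complex.continuous_abs : Continuous (fun z : ℂ => Complex.abs z) := continuous_norm

lemma Complex.abs_mul_exp_arg_mul_I (x : ℂ) :
    ↑(Complex.abs x) * Complex.exp (Complex.arg x * Complex.I) = x :=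
  Complex.norm_mul_exp_arg_mul_I x

lemma Complex.abs_exp (z : ℂ) : Complex.abs (Complex.exp z) = Real.exp z.re := Complex.norm_exp z

lemma Complex.abs_cpow_real (x : ℂ) (y : ℝ) : Complex.abs (x ^ (y : ℂ)) = Complex.abs x ^ y :=
  Complex.norm_cpow_real x y

section prelim
lemma sq_cpow_half {a : ℂ} (ha : a ≠ 0) : a ^ (1/2 : ℂ) * a ^ (1/2 : ℂ) = a := by
  rw [← Complex.cpow_add _ _ ha]; norm_num

lemma cpow_half_ne_zero {a : ℂ} (ha : a ≠ 0) : a ^ (1/2 : ℂ) ≠ 0 := by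
  simp [Complex.cpow_eq_zero_iff, ha]

lemma log_half_im' (a : ℂ) : (Complex.log a * (1/2)).im = a.arg / 2 := by
  simp [Complex.log_im, Complex.mul_im, Complex.log_re]; ring

lemma re_cpow_half_nonneg (a : ℂ) : 0 ≤ (a ^ (1/2 : ℂ)).re := by
  rcases eq_or_ne a 0 with rfl | ha
  · rw [Complex.zero_cpow (by norm_num)]; simp
  · rw [Complex.cpow_def_of_ne_zero ha, Complex.exp_re]
    apply mul_nonneg (Real.exp_pos _).le
    apply Real.cos_nonneg_of_mem_Icc
    rw [log_half_im']
    constructor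
    · nlinarith [Complex.neg_pi_lt_arg a, Real.pi_pos]
    · nlinarith [Complex.arg_le_pi a, Real.pi_pos]

lemma abs_cpow_half (a : ℂ) : Complex.abs (a ^ (1/2 : ℂ)) = Real.sqrt (Complex.abs a) := by
  have h : (1/2 : ℂ) = ((1/2 : ℝ) : ℂ) := by norm_num
  rw [h, Complex.abs_cpow_real, Real.sqrt_eq_rpow]

lemma pos_real_cpow_half {t : ℝ} (ht : 0 ≤ t) : ((t : ℂ)) ^ (1/2 : ℂ) = (Real.sqrt t : ℂ) := by
  have h : (1/2 : ℂ) = ((1/2 : ℝ) : ℂ) := by norm_num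
  rw [h, ← Complex.ofReal_cpow ht, Real.sqrt_eq_rpow]

lemma log_half_im (a : ℂ) : (Complex.log a * (1/2)).im = a.arg / 2 := by
  simp [Complex.log_im, Complex.mul_im, Complex.log_re]; ring

lemma neg_real_cpow_half {t : ℝ} (ht : t < 0) :
    ((t : ℂ)) ^ (1/2 : ℂ) = (Real.sqrt (-t) : ℂ) * Complex.I := by
  have ht0 : (t : ℂ) ≠ 0 := by exact_mod_cast ht.ne
  rw [Complex.cpow_def_of_ne_zero ht0]
  have hlog : Complex.log (t : ℂ) * (1/2)
      = ((Real.log (-t) / 2 : ℝ) : ℂ) + ((Real.pi/2 : ℝ) : ℂ) * Complex.I := by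
    apply Complex.ext
    · simp [Complex.log_re, Complex.mul_re, Complex.add_re, Complex.abs_ofReal,
        abs_of_neg ht, Complex.mul_im]
      ring
    · rw [log_half_im, Complex.arg_ofReal_of_neg ht]
      simp
  rw [hlog, Complex.exp_add, ← Complex.ofReal_exp]
  have h1 : Real.exp (Real.log (-t) / 2) = Real.sqrt (-t) := by
    rw [Real.sqrt_eq_rpow, Real.rpow_def_of_pos (by linarith)]
    ring_nf
  rw [h1, Complex.exp_mul_I, ← Complex.ofReal_cos, ← Complex.ofReal_sin,
    Real.cos_pi_div_two, Real.sin_pi_div_two]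
  simp
end prelim

section base

variable {ζ : ℂ}

lemma ne_zero_of_one_lt (h : 1 < Complex.abs ζ) : ζ ≠ 0 := by
  intro h0; rw [h0] at h; simp at h; linarith

lemma sub_one_ne_zero' (h : 1 < Complex.abs ζ) : ζ - 1 ≠ 0 := by
  intro h0; rw [sub_eq_zero] at h0; rw [h0] at h; simp at h

lemma add_one_ne_zero' (h : 1 < Complex.abs ζ) : ζ + 1 ≠ 0 := by
  intro h0; have : ζ = -1 := by linear_combination h0
  rw [this] at h; simp at h

lemma base_re_pos (h : 1 < Complex.abs ζ) : 0 < (1 - ζ⁻¹ ^ 2).re := by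
  have h1 : Complex.abs (ζ⁻¹ ^ 2) < 1 := by
    rw [map_pow, map_inv₀]
    have : Complex.abs ζ ≠ 0 := by positivity
    rw [inv_pow]
    apply inv_lt_one_of_one_lt₀
    nlinarith
  have h2 : (ζ⁻¹ ^ 2).re < 1 := lt_of_le_of_lt (Complex.re_le_abs _) h1
  simp only [Complex.sub_re, Complex.one_re]
  linarith

lemma base_mem_slit (h : 1 < Complex.abs ζ) : (1 - ζ⁻¹ ^ 2) ∈ Complex.slitPlane :=
  Or.inl (base_re_pos h)

lemma base_ne_zero (h : 1 < Complex.abs ζ) : (1 - ζ⁻¹ ^ 2) ≠ 0 := by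
  intro h0
  have := base_re_pos h
  rw [h0] at this; simp at this

lemma vv_ne_zero (h : 1 < Complex.abs ζ) : (1 - ζ⁻¹ ^ 2) ^ (1/2 : ℂ) ≠ 0 :=
  cpow_half_ne_zero (base_ne_zero h)

lemma squares_eq (h : 1 < Complex.abs ζ) :
    ((ζ - 1) ^ (1/2 : ℂ) * (ζ + 1) ^ (1/2 : ℂ)) * ((ζ - 1) ^ (1/2 : ℂ) * (ζ + 1) ^ (1/2 : ℂ))
      = (ζ * (1 - ζ⁻¹ ^ 2) ^ (1/2 : ℂ)) * (ζ * (1 - ζ⁻¹ ^ 2) ^ (1/2 : ℂ)) := by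
  have h1 : ((ζ - 1) ^ (1/2 : ℂ) * (ζ + 1) ^ (1/2 : ℂ)) * ((ζ - 1) ^ (1/2 : ℂ) * (ζ + 1) ^ (1/2 : ℂ))
      = ((ζ - 1) ^ (1/2:ℂ) * (ζ - 1) ^ (1/2:ℂ)) * ((ζ + 1) ^ (1/2:ℂ) * (ζ + 1) ^ (1/2:ℂ)) := by ring
  rw [h1, sq_cpow_half (sub_one_ne_zero' h), sq_cpow_half (add_one_ne_zero' h)]
  have h2 : (ζ * (1 - ζ⁻¹ ^ 2) ^ (1/2 : ℂ)) * (ζ * (1 - ζ⁻¹ ^ 2) ^ (1/2 : ℂ))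
      = ζ^2 * ((1 - ζ⁻¹ ^ 2) ^ (1/2:ℂ) * (1 - ζ⁻¹ ^ 2) ^ (1/2:ℂ)) := by ring
  rw [h2, sq_cpow_half (base_ne_zero h)]
  have hz0 : ζ ≠ 0 := ne_zero_of_one_lt h
  field_simp
  ring

end base


noncomputable def Lf (ζ : ℂ) : ℂ := (ζ - 1) ^ (1/2 : ℂ) * (ζ + 1) ^ (1/2 : ℂ)
noncomputable def Rf (ζ : ℂ) : ℂ := ζ * (1 - ζ⁻¹ ^ 2) ^ (1/2 : ℂ)

def Sset : Set ℂ := {ζ : ℂ | 1 < Complex.abs ζ} ∩ Complex.slitPlane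

lemma Rf_ne_zero {ζ : ℂ} (h : 1 < Complex.abs ζ) : Rf ζ ≠ 0 :=
  mul_ne_zero (ne_zero_of_one_lt h) (vv_ne_zero h)

lemma Rf_differentiableAt {ζ : ℂ} (h : 1 < Complex.abs ζ) : DifferentiableAt ℂ Rf ζ := by
  have hz0 : ζ ≠ 0 := ne_zero_of_one_lt h
  apply DifferentiableAt.mul differentiableAt_id
  exact DifferentiableAt.cpow
    ((differentiableAt_const 1).sub ((differentiableAt_id.inv hz0).pow 2))
    (differentiableAt_const _) (base_mem_slit h)

lemma abs_eq_abs_re_of_im_zero {ζ : ℂ} (him : ζ.im = 0) : Complex.abs ζ = |ζ.re| := by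
  have hζx : ζ = ((ζ.re : ℝ) : ℂ) := Complex.ext (by simp) (by simp [him])
  conv_lhs => rw [hζx]
  exact Complex.abs_ofReal _

lemma mem_slit_of_S {ζ : ℂ} (hζ : ζ ∈ Sset) : (ζ - 1) ∈ Complex.slitPlane ∧ (ζ + 1) ∈ Complex.slitPlane := by
  obtain ⟨h1, hsl⟩ := hζ
  have h1' : 1 < Complex.abs ζ := h1
  rcases eq_or_ne ζ.im 0 with him | him
  · have hre : 0 < ζ.re := by
      rcases hsl with h | h
      · exact h
      · exact absurd him h
    have hgt : 1 < ζ.re := by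
      rw [abs_eq_abs_re_of_im_zero him, abs_of_pos hre] at h1'
      exact h1'
    constructor
    · exact Or.inl (by simp [Complex.sub_re]; linarith)
    · exact Or.inl (by simp [Complex.add_re]; linarith)
  · exact ⟨Or.inr (by simp [Complex.sub_im, him]), Or.inr (by simp [Complex.add_im, him])⟩

lemma Lf_continuousOn : ContinuousOn Lf Sset := by
  intro ζ hζ
  obtain ⟨hm1, hp1⟩ := mem_slit_of_S hζ
  have : DifferentiableAt ℂ Lf ζ := by
    apply DifferentiableAt.mul
    · exact DifferentiableAt.cpow (differentiableAt_id.sub_const 1) (differentiableAt_const _) hm1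
    · exact DifferentiableAt.cpow (differentiableAt_id.add_const 1) (differentiableAt_const _) hp1
  exact this.continuousAt.continuousWithinAt

lemma Rf_continuousOn : ContinuousOn Rf Sset := fun ζ hζ =>
  (Rf_differentiableAt hζ.1).continuousAt.continuousWithinAt

lemma Sset_isOpen : IsOpen Sset :=
  (isOpen_lt continuous_const Complex.continuous_abs).inter Complex.isOpen_slitPlane

lemma Sset_preconnected : IsPreconnected Sset := by
  have himage : Sset = (fun p : ℝ × ℝ => (p.1 : ℂ) * Complex.exp (p.2 * Complex.I)) ''
      (Set.Ioi 1 ×ˢ Set.Ioo (-Real.pi) Real.pi) := by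
    ext ζ
    constructor
    · rintro ⟨h1, hsl⟩
      refine ⟨⟨Complex.abs ζ, Complex.arg ζ⟩, ⟨h1, Complex.neg_pi_lt_arg ζ,
        lt_of_le_of_ne (Complex.arg_le_pi ζ) (Complex.slitPlane_arg_ne_pi hsl)⟩, ?_⟩
      exact Complex.abs_mul_exp_arg_mul_I ζ
    · rintro ⟨⟨r, θ⟩, ⟨hr, hθ1, hθ2⟩, rfl⟩
      simp only [Set.mem_Ioi] at hr
      have hθ1' : -Real.pi < θ := hθ1
      have hθ2' : θ < Real.pi := hθ2
      have hform : (r : ℂ) * Complex.exp ((θ:ℂ) * Complex.I)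
          = ((r * Real.cos θ : ℝ) : ℂ) + ((r * Real.sin θ : ℝ) : ℂ) * Complex.I := by
        rw [Complex.exp_mul_I, ← Complex.ofReal_cos, ← Complex.ofReal_sin]
        push_cast
        ring
      constructor
      · show 1 < Complex.abs _
        rw [map_mul, Complex.abs_exp]
        simp only [Complex.mul_re, Complex.ofReal_re, Complex.I_re, Complex.ofReal_im, Complex.I_im]
        simp
        rw [abs_of_pos (by linarith)]
        linarith
      · show ((r:ℂ) * Complex.exp ((θ:ℂ) * Complex.I)) ∈ Complex.slitPlane
        rw [hform]
        have hgen : ∀ a b : ℝ, (((a:ℝ) : ℂ) + ((b:ℝ) : ℂ) * Complex.I).re = a ∧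
            (((a:ℝ) : ℂ) + ((b:ℝ) : ℂ) * Complex.I).im = b := by intro a b; constructor <;> simp
        rw [Complex.mem_slitPlane_iff, (hgen _ _).1, (hgen _ _).2]
        rcases eq_or_ne (Real.sin θ) 0 with hs | hs
        · have hθ0 : θ = 0 := by
            rwa [Real.sin_eq_zero_iff_of_lt_of_lt hθ1' hθ2'] at hs
          left
          simp [hθ0]
          linarith
        · right
          exact mul_ne_zero (by linarith) hs
  rw [himage]
  exact ((isPreconnected_Ioi.prod isPreconnected_Ioo)).image _
    (Continuous.continuousOn (by continuity))

lemma key_id_slit {ζ : ℂ} (h1 : 1 < Complex.abs ζ) (hsl : ζ ∈ Complex.slitPlane) :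
    Lf ζ = Rf ζ := by
  by_contra hne
  have hζS : ζ ∈ Sset := ⟨h1, hsl⟩
  -- pointwise: (L - R)(L + R) = 0 on Sset
  have hpt : ∀ w ∈ Sset, (Lf w - Rf w) * (Lf w + Rf w) = 0 := by
    intro w hw
    have := squares_eq hw.1
    show _ = 0
    have : Lf w * Lf w = Rf w * Rf w := this
    ring_nf
    linear_combination this
  set u : Set ℂ := Sset ∩ ((fun w => Lf w + Rf w) ⁻¹' {(0:ℂ)}ᶜ) with hu_def
  set v : Set ℂ := Sset ∩ ((fun w => Lf w - Rf w) ⁻¹' {(0:ℂ)}ᶜ) with hv_def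
  have hu_open : IsOpen u :=
    (Lf_continuousOn.add Rf_continuousOn).isOpen_inter_preimage Sset_isOpen (isOpen_compl_singleton)
  have hv_open : IsOpen v :=
    (Lf_continuousOn.sub Rf_continuousOn).isOpen_inter_preimage Sset_isOpen (isOpen_compl_singleton)
  have hsub : Sset ⊆ u ∪ v := by
    intro w hw
    by_contra hc
    simp only [Set.mem_union, not_or] at hc
    simp only [hu_def, hv_def, Set.mem_inter_iff, Set.mem_preimage, Set.mem_compl_iff,
      Set.mem_singleton_iff, not_and, not_not] at hc
    have h1' := hc.1 hw
    have h2' := hc.2 hw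
    have hR0 : Rf w = 0 := by linear_combination (h1' - h2')/2
    exact Rf_ne_zero hw.1 hR0
  have h2S : (2 : ℂ) ∈ Sset := by
    constructor
    · show 1 < Complex.abs 2; simp
    · exact Or.inl (by norm_num)
  have h2u : (2 : ℂ) ∈ u := by
    refine ⟨h2S, ?_⟩
    simp only [Set.mem_preimage, Set.mem_compl_iff, Set.mem_singleton_iff]
    have hL : Lf 2 = (Real.sqrt 3 : ℂ) := by
      unfold Lf
      norm_num
      rw [show (3:ℂ) = ((3:ℝ):ℂ) by norm_num, pos_real_cpow_half (by norm_num)]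
    have hR : Rf 2 = (2 * Real.sqrt (3/4) : ℝ) := by
      unfold Rf
      have h34 : (1 - (2:ℂ)⁻¹ ^ 2) = (((3/4 : ℝ)):ℂ) := by norm_num
      rw [h34, pos_real_cpow_half (by norm_num)]
      push_cast
      ring
    rw [hL, hR]
    rw [← Complex.ofReal_add]
    have hpos : (0:ℝ) < Real.sqrt 3 + 2 * Real.sqrt (3/4) := by positivity
    exact Complex.ofReal_ne_zero.mpr hpos.ne'
  have hζv : ζ ∈ v := by
    refine ⟨hζS, ?_⟩
    simp only [Set.mem_preimage, Set.mem_compl_iff, Set.mem_singleton_iff, sub_ne_zero]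
    exact hne
  obtain ⟨w, ⟨hwS, hwu, hwv⟩⟩ :=
    Sset_preconnected u v hu_open hv_open hsub ⟨2, h2S, h2u⟩ ⟨ζ, hζS, hζv⟩
  have hw1 : Lf w + Rf w ≠ 0 := hwu.2
  have hw2 : Lf w - Rf w ≠ 0 := hwv.2
  exact (mul_ne_zero hw2 hw1) (hpt w hwS)

lemma key_id {ζ : ℂ} (h1 : 1 < Complex.abs ζ) :
    (ζ - 1) ^ (1/2 : ℂ) * (ζ + 1) ^ (1/2 : ℂ) = ζ * (1 - ζ⁻¹ ^ 2) ^ (1/2 : ℂ) := by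
  by_cases hsl : ζ ∈ Complex.slitPlane
  · exact key_id_slit h1 hsl
  · -- ζ is a real number ≤ 0, with |ζ| > 1, so ζ = x < -1
    rw [Complex.mem_slitPlane_iff] at hsl
    push_neg at hsl
    obtain ⟨hre, him⟩ := hsl
    have hζx : ζ = ((ζ.re : ℝ) : ℂ) := by
      apply Complex.ext <;> simp [him]
    set x := ζ.re with hx
    have habs : Complex.abs ζ = |x| := by
      rw [hζx]; exact Complex.abs_ofReal x
    have hx1 : x < -1 := by
      rw [habs] at h1
      rcases abs_cases x with ⟨he, _⟩ | ⟨he, _⟩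
      · nlinarith
      · linarith
    rw [hζx]
    have hm : ((x:ℂ) - 1) = (((x - 1 : ℝ)) : ℂ) := by push_cast; ring
    have hp : ((x:ℂ) + 1) = (((x + 1 : ℝ)) : ℂ) := by push_cast; ring
    have hb : (1 - ((x:ℂ))⁻¹ ^ 2) = (((1 - x⁻¹ ^ 2 : ℝ)) : ℂ) := by push_cast; ring
    rw [hm, hp, hb, neg_real_cpow_half (by linarith), neg_real_cpow_half (by linarith),
      pos_real_cpow_half (t := 1 - x⁻¹^2) (by
        have hx0 : x ≠ 0 := by linarith
        have : x⁻¹ ^ 2 < 1 := by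
          rw [inv_pow]
          apply inv_lt_one_of_one_lt₀
          nlinarith
        linarith)]
    -- LHS = √(1-x) I * √(-(x+1)) I = -√((1-x)(-(x+1)))
    have hL : (Real.sqrt (-(x-1)) : ℂ) * Complex.I * ((Real.sqrt (-(x+1)) : ℂ) * Complex.I)
        = -((Real.sqrt ((-(x-1)) * (-(x+1))) : ℂ)) := by
      have := Real.sqrt_mul (by linarith : (0:ℝ) ≤ -(x-1)) (-(x+1))
      rw [this]
      push_cast
      have hI : Complex.I * Complex.I = -1 := Complex.I_mul_I
      ring_nf
      rw [Complex.I_sq]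
      ring
    rw [hL]
    rw [← Complex.ofReal_mul]
    rw [← Complex.ofReal_neg]
    rw [Complex.ofReal_inj]
    -- real identity: -√((1-x)(-(x+1))) = x √(1 - x⁻²)
    have hx0 : x ≠ 0 := by linarith
    have hpos : (0:ℝ) ≤ 1 - x⁻¹^2 := by
      have : x⁻¹ ^ 2 < 1 := by
        rw [inv_pow]; apply inv_lt_one_of_one_lt₀; nlinarith
      linarith
    have hxneg : x < 0 := by linarith
    rw [show x * Real.sqrt (1 - x⁻¹^2) = -(Real.sqrt (x^2) * Real.sqrt (1 - x⁻¹^2)) by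
      rw [Real.sqrt_sq_eq_abs, abs_of_neg hxneg]; ring]
    rw [← Real.sqrt_mul (by positivity)]
    congr 1
    field_simp
    ring


noncomputable def uu (ζ : ℂ) : ℂ := ((1 - ζ⁻¹ ^ 2) ^ (1/2 : ℂ))⁻¹

lemma uu_bound {ζ : ℂ} (h : 2 ≤ Complex.abs ζ) :
    Complex.abs (uu ζ - 1) ≤ 2 / (Complex.abs ζ)^2 := by
  have h1 : 1 < Complex.abs ζ := by linarith
  set b : ℂ := 1 - ζ⁻¹ ^ 2 with hb_def
  set v : ℂ := b ^ (1/2 : ℂ) with hv_def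
  have hvne : v ≠ 0 := vv_ne_zero h1
  have habsw : Complex.abs (ζ⁻¹ ^ 2) = ((Complex.abs ζ)^2)⁻¹ := by
    rw [map_pow, map_inv₀, inv_pow]
  have hw_small : Complex.abs (ζ⁻¹ ^ 2) ≤ 1/4 := by
    rw [habsw]
    rw [inv_le_comm₀ (by positivity) (by norm_num)]
    nlinarith
  -- |b| ≥ 3/4
  have habsb : (3/4 : ℝ) ≤ Complex.abs b := by
    have hn := norm_sub_norm_le (1:ℂ) (ζ⁻¹^2)
    simp only [Complex.norm_eq_abs, norm_one, map_one] at hn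
    calc (3/4 : ℝ) ≤ 1 - Complex.abs (ζ⁻¹^2) := by linarith
      _ ≤ Complex.abs (1 - ζ⁻¹^2) := by
          have h1 : Complex.abs (1:ℂ) = 1 := map_one Complex.abs
          linarith [norm_sub_norm_le (1:ℂ) (ζ⁻¹^2), Complex.norm_eq_abs (1 - ζ⁻¹^2)]
  -- |v| ≥ 1/2
  have habsv : (1/2 : ℝ) ≤ Complex.abs v := by
    rw [hv_def, abs_cpow_half]
    rw [show (1/2:ℝ) = Real.sqrt (1/4) by
      rw [show (1/4:ℝ) = (1/2)^2 by norm_num, Real.sqrt_sq (by norm_num)]]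
    exact Real.sqrt_le_sqrt (by linarith)
  -- |1 - v| ≤ |1 - b| = |w|
  have hsq : v * v = b := sq_cpow_half (base_ne_zero h1)
  have hfact : (1 - v) * (1 + v) = 1 - b := by linear_combination -hsq
  have habs1v : 1 ≤ Complex.abs (1 + v) := by
    have hre : (1:ℝ) ≤ (1 + v).re := by
      simp only [Complex.add_re, Complex.one_re]
      have := re_cpow_half_nonneg b
      rw [← hv_def] at this
      linarith
    calc (1:ℝ) ≤ (1 + v).re := hre
      _ ≤ Complex.abs (1 + v) := Complex.re_le_abs _
  have honev : Complex.abs (1 - v) ≤ Complex.abs (ζ⁻¹ ^ 2) := by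
    have h1b : Complex.abs (1 - b) = Complex.abs (ζ⁻¹ ^ 2) := by
      rw [hb_def]; congr 1; ring
    have := congrArg Complex.abs hfact
    rw [map_mul, h1b] at this
    nlinarith [Complex.abs.nonneg (1 - v), Complex.abs.nonneg (ζ⁻¹^2)]
  -- conclude
  have huv : uu ζ - 1 = (1 - v) / v := by
    rw [show uu ζ = v⁻¹ from rfl]
    field_simp
  rw [huv, map_div₀]
  have hvpos : 0 < Complex.abs v := Complex.abs.pos hvne
  rw [div_le_div_iff₀ hvpos (by positivity)]
  have hkey : Complex.abs (1 - v) ≤ ((Complex.abs ζ)^2)⁻¹ := habsw ▸ honev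
  calc Complex.abs (1 - v) * (Complex.abs ζ)^2
      ≤ ((Complex.abs ζ)^2)⁻¹ * (Complex.abs ζ)^2 :=
        mul_le_mul_of_nonneg_right hkey (by positivity)
    _ = 1 := by field_simp
    _ ≤ 2 * Complex.abs v := by linarith




/-- The real interval `[-1, 1]` embedded in the complex plane. -/
def intervalCC : Set ℂ := Complex.ofReal '' Set.Icc (-1 : ℝ) 1



lemma my_circleIntegral_add {f g : ℂ → ℂ} {c : ℂ} {R : ℝ} (hf : CircleIntegrable f c R)
    (hg : CircleIntegrable g c R) :
    (∮ ζ in C(c, R), (f ζ + g ζ)) = (∮ ζ in C(c, R), f ζ) + ∮ ζ in C(c, R), g ζ := by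
  have hng : CircleIntegrable (fun ζ => -g ζ) c R := hg.neg
  have h1 : (∮ ζ in C(c, R), (f ζ + g ζ)) = ∮ ζ in C(c, R), (f ζ - (-g ζ)) := by
    congr 1; funext ζ; ring
  have h2 : (∮ ζ in C(c, R), (-g ζ)) = - ∮ ζ in C(c, R), g ζ := by
    simp only [circleIntegral, smul_neg, intervalIntegral.integral_neg]
  rw [h1, circleIntegral.integral_sub hf hng, h2]
  ring

lemma uu_differentiableAt {ζ : ℂ} (h : 1 < Complex.abs ζ) : DifferentiableAt ℂ uu ζ := by
  have hz0 : ζ ≠ 0 := ne_zero_of_one_lt h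
  apply DifferentiableAt.inv
  · exact DifferentiableAt.cpow
      ((differentiableAt_const 1).sub ((differentiableAt_id.inv hz0).pow 2))
      (differentiableAt_const _) (base_mem_slit h)
  · exact vv_ne_zero h

/-- for `z ∉ [-1,1]` and `1 < R < |z|`,
`(1/(2πi)) ∮_{|ζ|=R} ζ/((ζ-1)^{1/2}(ζ+1)^{1/2}(ζ-z)) dζ = 1 - z/((z-1)^{1/2}(z+1)^{1/2})`. -/
theorem circle_integral_toda_cauchy_transform (z : ℂ) (hz : z ∉ intervalCC)
    (R : ℝ) (hR1 : 1 < R) (hRz : R < ‖z‖) :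
    (1 / (2 * Real.pi * Complex.I)) *
        (∮ ζ in C(0, R), ζ / ((ζ - 1) ^ (1 / 2 : ℂ) * (ζ + 1) ^ (1 / 2 : ℂ) * (ζ - z)))
      = 1 - z / ((z - 1) ^ (1 / 2 : ℂ) * (z + 1) ^ (1 / 2 : ℂ)) := by
  have hRz : R < Complex.abs z := hRz
  have hz1 : 1 < Complex.abs z := lt_trans hR1 hRz
  have hz0 : z ≠ 0 := ne_zero_of_one_lt hz1
  have hR0 : (0:ℝ) < R := by linarith
  set c : ℂ := 1 - uu z with hc_def
  set g : ℂ → ℂ := dslope uu z with hg_def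
  have hUopen : IsOpen {ζ : ℂ | 1 < Complex.abs ζ} :=
    isOpen_lt continuous_const Complex.continuous_abs
  have hgdiff : ∀ ζ : ℂ, 1 < Complex.abs ζ → DifferentiableAt ℂ g ζ := by
    have hdon : DifferentiableOn ℂ g {ζ : ℂ | 1 < Complex.abs ζ} :=
      (differentiableOn_dslope (hUopen.mem_nhds hz1)).mpr
        (fun ζ hζ => (uu_differentiableAt hζ).differentiableWithinAt)
    intro ζ hζ
    exact (hdon ζ hζ).differentiableAt (hUopen.mem_nhds hζ)
  -- abs on spheres
  have habs_sphere : ∀ {ρ : ℝ} {ζ : ℂ}, 0 ≤ ρ → ζ ∈ sphere (0:ℂ) ρ → Complex.abs ζ = ρ := by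
    intro ρ ζ _ hζ
    simpa [Complex.dist_eq] using hζ
  -- step 1 : integrand equality on the circle
  have hcongr : Set.EqOn (fun ζ => ζ / ((ζ - 1) ^ (1/2 : ℂ) * (ζ + 1) ^ (1/2 : ℂ) * (ζ - z)))
      (fun ζ => g ζ + uu z * (ζ - z)⁻¹) (sphere (0:ℂ) R) := by
    intro ζ hζ
    have habs : Complex.abs ζ = R := habs_sphere hR0.le hζ
    have h1 : 1 < Complex.abs ζ := by rw [habs]; exact hR1
    have hζz : ζ ≠ z := by
      intro hh; rw [hh] at habs; rw [habs] at hRz; exact lt_irrefl _ hRz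
    have hζz' : ζ - z ≠ 0 := sub_ne_zero.mpr hζz
    have hζ0 : ζ ≠ 0 := ne_zero_of_one_lt h1
    have hvζ : (1 - ζ⁻¹ ^ 2) ^ (1/2 : ℂ) ≠ 0 := vv_ne_zero h1
    have hvz : (1 - z⁻¹ ^ 2) ^ (1/2 : ℂ) ≠ 0 := vv_ne_zero hz1
    simp only
    rw [hg_def, dslope_of_ne _ hζz, slope_def_field, key_id h1]
    simp only [uu]
    generalize hA : (1 - ζ⁻¹ ^ 2) ^ (1/2:ℂ) = a at hvζ ⊢
    generalize hB : (1 - z⁻¹ ^ 2) ^ (1/2:ℂ) = b at hvz ⊢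
    field_simp
    ring
  rw [circleIntegral.integral_congr hR0.le hcongr]
  -- integrability
  have hg_int : ∀ {ρ : ℝ}, R ≤ ρ → CircleIntegrable g 0 ρ := by
    intro ρ hρ
    apply ContinuousOn.circleIntegrable (by linarith)
    intro ζ hζ
    have h1 : 1 < Complex.abs ζ := by rw [habs_sphere (by linarith) hζ]; linarith
    exact (hgdiff ζ h1).continuousAt.continuousWithinAt
  have hinv_int : CircleIntegrable (fun ζ => uu z * (ζ - z)⁻¹) 0 R := by
    apply ContinuousOn.circleIntegrable hR0.le
    intro ζ hζ
    have habs : Complex.abs ζ = R := habs_sphere hR0.le hζ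
    have hζz : ζ - z ≠ 0 := sub_ne_zero.mpr (by
      intro hh; rw [hh] at habs; rw [habs] at hRz; exact lt_irrefl _ hRz)
    exact (((continuousAt_id.sub continuousAt_const).inv₀ hζz).const_smul (uu z)).continuousWithinAt
  rw [my_circleIntegral_add (hg_int le_rfl) hinv_int]
  -- the second integral vanishes
  have hI2 : (∮ ζ in C(0, R), uu z * (ζ - z)⁻¹) = 0 := by
    rw [circleIntegral.integral_const_mul]
    have h0 : (∮ ζ in C(0, R), (ζ - z)⁻¹) = 0 := by
      apply Complex.circleIntegral_eq_zero_of_differentiable_on_off_countable hR0.le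
        Set.countable_empty
      · intro ζ hζ
        have : Complex.abs ζ ≤ R := by
          simpa [Complex.dist_eq] using hζ
        have hζz : ζ - z ≠ 0 := sub_ne_zero.mpr (by
          intro hh; rw [hh] at this; linarith)
        exact ((continuousAt_id.sub continuousAt_const).inv₀ hζz).continuousWithinAt
      · intro ζ hζ
        have : Complex.abs ζ < R := by
          simpa [Complex.dist_eq] using hζ.1
        have hζz : ζ - z ≠ 0 := sub_ne_zero.mpr (by
          intro hh; rw [hh] at this; linarith)
        exact (differentiableAt_id.sub_const z).inv hζz
    rw [h0, mul_zero]
  rw [hI2, add_zero]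
  -- main evaluation of ∮ g
  have hconst : ∀ ρ : ℝ, R ≤ ρ → (∮ ζ in C(0, ρ), g ζ) = (∮ ζ in C(0, R), g ζ) := by
    intro ρ hρ
    apply Complex.circleIntegral_eq_of_differentiable_on_annulus_off_countable hR0 hρ
      Set.countable_empty
    · intro ζ hζ
      have h1 : 1 < Complex.abs ζ := by
        have : R ≤ Complex.abs ζ := by
          have := hζ.2
          simp only [mem_ball, Complex.dist_eq, sub_zero, not_lt] at this
          simpa [Complex.dist_eq] using this
        linarith
      exact (hgdiff ζ h1).continuousAt.continuousWithinAt
    · intro ζ hζ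
      have h1 : 1 < Complex.abs ζ := by
        have : R ≤ Complex.abs ζ := by
          have := hζ.1.2
          simp only [mem_closedBall, Complex.dist_eq, sub_zero, not_le] at this
          exact this.le
        linarith
      exact hgdiff ζ h1
  have hinv0_int : ∀ {ρ : ℝ}, R ≤ ρ → CircleIntegrable (fun ζ : ℂ => c * ζ⁻¹) 0 ρ := by
    intro ρ hρ
    apply ContinuousOn.circleIntegrable (by linarith)
    intro ζ hζ
    have h1 : 1 < Complex.abs ζ := by rw [habs_sphere (by linarith) hζ]; linarith
    exact ((continuousAt_id.inv₀ (ne_zero_of_one_lt h1)).const_smul c).continuousWithinAt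
  have hsplit : ∀ ρ : ℝ, R ≤ ρ → (∮ ζ in C(0, ρ), (g ζ - c * ζ⁻¹))
      = (∮ ζ in C(0, R), g ζ) - c * (2 * Real.pi * Complex.I) := by
    intro ρ hρ
    have hρ0 : (0:ℝ) < ρ := lt_of_lt_of_le hR0 hρ
    rw [circleIntegral.integral_sub (hg_int hρ) (hinv0_int hρ), hconst ρ hρ,
      circleIntegral.integral_const_mul]
    congr 1
    have h0ball : (0:ℂ) ∈ ball (0:ℂ) ρ := by simpa using hρ0
    have := circleIntegral.integral_sub_inv_of_mem_ball h0ball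
    simp only [sub_zero] at this
    rw [this]
  -- the tail bound
  set M : ℝ := 1 + Complex.abs z * Complex.abs c with hM_def
  have hM_pos : 0 < M := by positivity
  set ρ₀ : ℝ := max (max R 2) (2 * Complex.abs z) with hρ₀_def
  have htail : ∀ ρ : ℝ, ρ₀ ≤ ρ →
      ‖∮ ζ in C(0, ρ), (g ζ - c * ζ⁻¹)‖ ≤ 2 * Real.pi * ρ * (2 * M / ρ^2) := by
    intro ρ hρ
    have hρR : R ≤ ρ := le_trans (le_trans (le_max_left _ _) (le_max_left _ _)) hρ
    have hρ2 : (2:ℝ) ≤ ρ := le_trans (le_trans (le_max_right _ _) (le_max_left _ _)) hρ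
    have hρz : 2 * Complex.abs z ≤ ρ := le_trans (le_max_right _ _) hρ
    have hρ0 : (0:ℝ) < ρ := by linarith
    apply circleIntegral.norm_integral_le_of_norm_le_const hρ0.le
    intro ζ hζ
    have habs : Complex.abs ζ = ρ := habs_sphere hρ0.le hζ
    have h1 : 1 < Complex.abs ζ := by rw [habs]; linarith
    have hζ0 : ζ ≠ 0 := ne_zero_of_one_lt h1
    have habsz_pos : 0 < Complex.abs z := by linarith
    have hζz_low : ρ / 2 ≤ Complex.abs (ζ - z) := by
      have h1' := norm_sub_norm_le ζ z
      simp only [Complex.norm_eq_abs] at h1'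
      rw [habs] at h1'
      linarith
    have hζz : ζ ≠ z := by
      intro hh
      rw [hh, sub_self] at hζz_low
      simp only [map_zero] at hζz_low
      linarith
    have hζz' : ζ - z ≠ 0 := sub_ne_zero.mpr hζz
    -- algebraic form of the integrand
    have hform : g ζ - c * ζ⁻¹ = (ζ * (uu ζ - 1) + z * c) / (ζ * (ζ - z)) := by
      rw [hg_def, dslope_of_ne _ hζz, slope_def_field, hc_def]
      field_simp
      ring
    rw [hform]
    simp only [Complex.norm_eq_abs, map_div₀, map_mul]
    have hnum : Complex.abs (ζ * (uu ζ - 1) + z * c) ≤ M := by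
      calc Complex.abs (ζ * (uu ζ - 1) + z * c)
          ≤ Complex.abs (ζ * (uu ζ - 1)) + Complex.abs (z * c) := Complex.abs.add_le _ _
        _ = Complex.abs ζ * Complex.abs (uu ζ - 1) + Complex.abs z * Complex.abs c := by
            rw [map_mul, map_mul]
        _ ≤ ρ * (2 / ρ^2) + Complex.abs z * Complex.abs c := by
            apply add_le_add_left
            rw [habs]
            apply mul_le_mul_of_nonneg_left _ hρ0.le
            have := uu_bound (by rw [habs]; exact hρ2)
            rwa [habs] at this
        _ ≤ M := by
            rw [hM_def]
            have h2ρ : ρ * (2 / ρ^2) = 2/ρ := by field_simp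
            rw [h2ρ]
            have : 2/ρ ≤ 1 := by
              rw [div_le_one hρ0]; linarith
            linarith
    have hden : ρ^2 / 2 ≤ Complex.abs ζ * Complex.abs (ζ - z) := by
      rw [habs]
      calc ρ^2/2 = ρ * (ρ/2) := by ring
        _ ≤ ρ * Complex.abs (ζ - z) := mul_le_mul_of_nonneg_left hζz_low hρ0.le
    calc Complex.abs (ζ * (uu ζ - 1) + z * c) / (Complex.abs ζ * Complex.abs (ζ - z))
        ≤ M / (ρ^2 / 2) := by
          apply div_le_div₀ hM_pos.le hnum (by positivity) hden
      _ = 2 * M / ρ^2 := by field_simp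
  -- two limits
  set A : ℂ := ∮ ζ in C(0, R), g ζ with hA_def
  have hlim1 : Tendsto (fun ρ : ℝ => ∮ ζ in C(0, ρ), (g ζ - c * ζ⁻¹)) atTop
      (nhds (A - c * (2 * Real.pi * Complex.I))) := by
    apply Tendsto.congr' _ tendsto_const_nhds
    filter_upwards [eventually_ge_atTop R] with ρ hρ
    exact (hsplit ρ hρ).symm
  have hlim2 : Tendsto (fun ρ : ℝ => ∮ ζ in C(0, ρ), (g ζ - c * ζ⁻¹)) atTop (nhds 0) := by
    apply squeeze_zero_norm' (a := fun ρ : ℝ => 4 * Real.pi * M / ρ)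
    · filter_upwards [eventually_ge_atTop ρ₀, eventually_gt_atTop (0:ℝ)] with ρ hρ hρ0
      calc ‖∮ ζ in C(0, ρ), (g ζ - c * ζ⁻¹)‖ ≤ 2 * Real.pi * ρ * (2 * M / ρ^2) := htail ρ hρ
        _ = 4 * Real.pi * M / ρ := by field_simp; ring
    · have : Tendsto (fun ρ : ℝ => ρ⁻¹) atTop (nhds 0) := tendsto_inv_atTop_zero
      have h4 := this.const_mul (4 * Real.pi * M)
      rw [mul_zero] at h4
      apply h4.congr
      intro ρ
      rw [div_eq_mul_inv]
  have hA : A = c * (2 * Real.pi * Complex.I) := by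
    have := tendsto_nhds_unique hlim1 hlim2
    have h2 : A - c * (2 * Real.pi * Complex.I) = 0 := this
    linear_combination h2
  -- final algebra
  have h2πI : (2 * (Real.pi:ℂ) * Complex.I) ≠ 0 := by
    simp [Real.pi_ne_zero, Complex.I_ne_zero]
  have hfinal : z / ((z - 1) ^ (1/2 : ℂ) * (z + 1) ^ (1/2 : ℂ)) = uu z := by
    rw [key_id hz1]
    simp only [uu]
    have hvz : (1 - z⁻¹ ^ 2) ^ (1/2 : ℂ) ≠ 0 := vv_ne_zero hz1
    generalize hB : (1 - z⁻¹ ^ 2) ^ (1/2:ℂ) = b at hvz ⊢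
    field_simp
  rw [hA, hfinal, hc_def]
  field_simp
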